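/- Let G be a finite p-group with Z(G) ≤ Φ(G), exp(G/G') = p^r and exp(Z(G)) = p^s. Then Aut_c(G) is nilpotent of class at most min(r, s). -/

import Mathlib

namespace AutcAux

open Pointwise
open scoped commutatorElement

variable {G : Type*} [Group G]

/-- The canonical map to the abelianization quotient. -/
private def ab {G : Type*} [Group G] : G →* G ⧸ commutator G :=
  QuotientGroup.mk' (commutator G)

/-- `x` is a `p^k`-th power modulo the commutator subgroup. -/
def Pw (p k : ℕ) (x : G) : Prop := ∃ y : G, ab x = (ab y) ^ p ^ k

lemma qcomm (a b : G ⧸ commutator G) : Commute a b := by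
  induction a using QuotientGroup.induction_on with | H a =>
  induction b using QuotientGroup.induction_on with | H b =>
  show (QuotientGroup.mk a : G ⧸ commutator G) * QuotientGroup.mk b =
    QuotientGroup.mk b * QuotientGroup.mk a
  rw [← QuotientGroup.mk_mul, ← QuotientGroup.mk_mul, QuotientGroup.eq]
  have h : ⁅b⁻¹, a⁻¹⁆ ∈ commutator G :=
    Subgroup.commutator_mem_commutator (Subgroup.mem_top _) (Subgroup.mem_top _)
  simpa [commutatorElement_def, mul_assoc] using h

lemma Pw_zero (p : ℕ) (x : G) : Pw p 0 x := ⟨x, by simp⟩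

lemma Pw_one_elt (p k : ℕ) : Pw p k (1 : G) := ⟨1, by simp⟩

lemma Pw_mul {p k : ℕ} {x y : G} (hx : Pw p k x) (hy : Pw p k y) : Pw p k (x * y) := by
  obtain ⟨a, ha⟩ := hx
  obtain ⟨b, hb⟩ := hy
  exact ⟨a * b, by rw [map_mul, ha, hb, map_mul, (qcomm (ab a) (ab b)).mul_pow]⟩

lemma Pw_inv {p k : ℕ} {x : G} (hx : Pw p k x) : Pw p k x⁻¹ := by
  obtain ⟨a, ha⟩ := hx
  exact ⟨a⁻¹, by rw [map_inv, ha, map_inv, inv_pow]⟩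

lemma Pw_mono {p j k : ℕ} (h : j ≤ k) {x : G} (hx : Pw p k x) : Pw p j x := by
  obtain ⟨a, ha⟩ := hx
  refine ⟨a ^ p ^ (k - j), ?_⟩
  rw [ha, map_pow, ← pow_mul, ← pow_add, Nat.sub_add_cancel h]

lemma Pw_map (σ : MulAut G) {p k : ℕ} {x : G} (hx : Pw p k x) : Pw p k (σ x) := by
  obtain ⟨y, hy⟩ := hx
  have h1 : x⁻¹ * y ^ p ^ k ∈ commutator G := by
    have : ab x = ab (y ^ p ^ k) := by rw [hy, map_pow]
    exact QuotientGroup.eq.mp this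
  have h2 : σ (x⁻¹ * y ^ p ^ k) ∈ commutator G := by
    have hmap : (commutator G).map σ.toMonoidHom ≤ commutator G := by
      rw [commutator_def, Subgroup.map_commutator]
      exact Subgroup.commutator_mono le_top le_top
    exact hmap ⟨_, h1, rfl⟩
  refine ⟨σ y, ?_⟩
  have h3 : (σ x)⁻¹ * (σ y) ^ p ^ k ∈ commutator G := by
    rwa [map_mul, map_inv, map_pow] at h2
  have : ab (σ x) = ab ((σ y) ^ p ^ k) := QuotientGroup.eq.mpr h3
  rw [this, map_pow]

lemma pw_one_of_mem_frattini [Finite G] {p : ℕ} (hp : p.Prime) {x : G}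
    (hx : x ∈ frattini G) : Pw p 1 x := by
  by_contra hnot
  set S : Subgroup G :=
    { carrier := {g : G | Pw p 1 g}
      one_mem' := Pw_one_elt p 1
      mul_mem' := fun ha hb => Pw_mul ha hb
      inv_mem' := fun ha => Pw_inv ha } with hS
  have hDS : commutator G ≤ S := by
    intro d hd
    refine ⟨1, ?_⟩
    have : ab d = 1 := (QuotientGroup.eq_one_iff d).mpr hd
    simp [this]
  have hppow : ∀ g : G, g ^ p ∈ S := fun g => ⟨g, by rw [map_pow, pow_one]⟩
  haveI : Finite (Subgroup G) :=
    Finite.of_injective (fun H : Subgroup G => (H : Set G)) SetLike.coe_injective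
  obtain ⟨M, hM, hmax'⟩ := Set.Finite.exists_maximalFor id
    {H : Subgroup G | S ≤ H ∧ x ∉ H} (Set.toFinite _) ⟨S, le_rfl, hnot⟩
  have hmax : ∀ N ∈ {H : Subgroup G | S ≤ H ∧ x ∉ H}, id M ≤ id N → id M = id N :=
    fun N hN h => le_antisymm h (hmax' hN h)
  obtain ⟨hSM, hxM⟩ := hM
  simp only [id] at hmax
  have hnormal : ∀ N : Subgroup G, S ≤ N → N.Normal := by
    intro N hSN
    constructor
    intro s hs g
    have h1 : g * s * g⁻¹ = ⁅g, s⁆ * s := by group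
    rw [h1]
    exact N.mul_mem (hSN (hDS (Subgroup.commutator_mem_commutator
      (Subgroup.mem_top _) (Subgroup.mem_top _)))) hs
  haveI hMnormal : M.Normal := hnormal M hSM
  have htop : M ⊔ Subgroup.zpowers x = ⊤ := by
    rw [Subgroup.eq_top_iff']
    intro g
    by_cases hg : g ∈ M
    · exact Subgroup.mem_sup_left hg
    · have hx' : x ∈ M ⊔ Subgroup.zpowers g := by
        by_contra hxn
        have h1 : M ≤ M ⊔ Subgroup.zpowers g := le_sup_left
        have heq := hmax (M ⊔ Subgroup.zpowers g) ⟨hSM.trans h1, hxn⟩ h1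
        exact hg (heq ▸ Subgroup.mem_sup_right (Subgroup.mem_zpowers g))
      have hset : (x : G) ∈ ((M : Set G) * ((Subgroup.zpowers g : Subgroup G) : Set G)) := by
        rw [← Subgroup.normal_mul]
        exact hx'
      obtain ⟨w, hw, t, ht, hwt⟩ := hset
      obtain ⟨k, hk⟩ := Subgroup.mem_zpowers_iff.mp ht
      have hgp : g ^ (p : ℤ) ∈ M := by
        have := hSM (hppow g)
        rwa [zpow_natCast]
      have hpk : ¬ ((p : ℤ) ∣ k) := by
        rintro ⟨c, rfl⟩
        apply hxM
        have : g ^ ((p : ℤ) * c) = (g ^ (p : ℤ)) ^ c := by rw [zpow_mul]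
        rw [← hwt, ← hk, this]
        exact M.mul_mem hw (M.zpow_mem hgp c)
      have hcop : IsCoprime (p : ℤ) k :=
        (Prime.coprime_iff_not_dvd (Nat.prime_iff_prime_int.mp hp)).mpr hpk
      obtain ⟨a, b, hab⟩ := hcop
      have hgdecomp : g = (g ^ (p : ℤ)) ^ a * (g ^ k) ^ b := by
        rw [← zpow_mul, ← zpow_mul, ← zpow_add]
        rw [show (p : ℤ) * a + k * b = a * p + b * k by ring, hab, zpow_one]
      rw [hgdecomp]
      have hgk : g ^ k ∈ M ⊔ Subgroup.zpowers x := by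
        have : g ^ k = w⁻¹ * x := by rw [← hwt, hk]; group
        rw [this]
        exact Subgroup.mul_mem _ (Subgroup.mem_sup_left (M.inv_mem hw))
          (Subgroup.mem_sup_right (Subgroup.mem_zpowers x))
      exact Subgroup.mul_mem _
        (Subgroup.mem_sup_left (M.zpow_mem hgp a)) (Subgroup.zpow_mem _ hgk b)
  have hco : IsCoatom M := by
    constructor
    · intro h
      exact hxM (h ▸ Subgroup.mem_top x)
    · intro N hMN
      have hxN : x ∈ N := by
        by_contra hxn
        exact hMN.ne (hmax N ⟨hSM.trans hMN.le, hxn⟩ hMN.le)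
      rw [eq_top_iff, ← htop, sup_le_iff]
      exact ⟨hMN.le, Subgroup.zpowers_le.mpr hxN⟩
  exact hxM (frattini_le_coatom hco hx)

/-! ### Central automorphisms -/

/-- The "deviation" map of an automorphism. -/
def cf (σ : MulAut G) (x : G) : G := x⁻¹ * σ x

lemma apply_eq (σ : MulAut G) (x : G) : σ x = x * cf σ x := by
  rw [cf, mul_inv_cancel_left]

lemma cf_mul {σ : MulAut G} (hσ : ∀ x : G, cf σ x ∈ Subgroup.center G) (x y : G) :
    cf σ (x * y) = cf σ x * cf σ y := by
  have hc := (Subgroup.mem_center_iff.mp (hσ x)) y⁻¹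
  have e : cf σ (x * y) = y⁻¹ * cf σ x * σ y := by
    simp only [cf, map_mul]; group
  rw [e, hc]
  simp only [cf]; group

/-- `cf σ` as a monoid hom, for a central automorphism. -/
def cF (σ : MulAut G) (hσ : ∀ x : G, cf σ x ∈ Subgroup.center G) : G →* G :=
  MonoidHom.mk' (cf σ) (cf_mul hσ)

lemma cf_commutator_eq_one {σ : MulAut G} (hσ : ∀ x : G, cf σ x ∈ Subgroup.center G)
    {d : G} (hd : d ∈ commutator G) : cf σ d = 1 := by
  have hker : commutator G ≤ (cF σ hσ).ker := by
    rw [commutator_def]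
    refine Subgroup.commutator_le.mpr fun a _ b _ => ?_
    rw [MonoidHom.mem_ker, map_commutatorElement]
    refine commutatorElement_eq_one_iff_commute.mpr ?_
    have := (Subgroup.mem_center_iff.mp (hσ a)) (cf σ b)
    exact this.symm
  exact hker hd

lemma cf_pow_eval {σ : MulAut G} (hσ : ∀ x : G, cf σ x ∈ Subgroup.center G)
    {p k : ℕ} {x y : G} (h : ab x = (ab y) ^ p ^ k) :
    cf σ x = (cf σ y) ^ p ^ k := by
  have h1 : x⁻¹ * y ^ p ^ k ∈ commutator G := by
    have : ab x = ab (y ^ p ^ k) := by rw [h, map_pow]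
    exact QuotientGroup.eq.mp this
  have h2 : cF σ hσ (x⁻¹ * y ^ p ^ k) = 1 := by
    have := cf_commutator_eq_one hσ h1
    simpa [cF] using this
  have h3 : (cF σ hσ x)⁻¹ * (cF σ hσ y) ^ p ^ k = 1 := by
    rw [← map_pow, ← map_inv, ← map_mul]
    exact h2
  have := inv_mul_eq_one.mp h3
  simpa [cF] using this

section Vanish

variable {p r s : ℕ}

lemma cf_vanish (hr : Monoid.exponent (G ⧸ commutator G) = p ^ r)
    (hs : Monoid.exponent (Subgroup.center G) = p ^ s)
    {σ : MulAut G} (hσ : ∀ x : G, cf σ x ∈ Subgroup.center G)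
    {z : G} (h : Pw p (min r s) z) : cf σ z = 1 := by
  obtain ⟨y, hy⟩ := h
  rcases le_total r s with hrs | hsr
  · rw [min_eq_left hrs] at hy
    have h1 : (ab y : G ⧸ commutator G) ^ p ^ r = 1 := by
      rw [← hr]; exact Monoid.pow_exponent_eq_one _
    have h2 : ab z = 1 := by rw [hy, h1]
    exact cf_commutator_eq_one hσ ((QuotientGroup.eq_one_iff z).mp h2)
  · rw [min_eq_right hsr] at hy
    have h2 : cf σ z = (cf σ y) ^ p ^ s := cf_pow_eval hσ hy
    have h3 : (⟨cf σ y, hσ y⟩ : Subgroup.center G) ^ p ^ s = 1 := by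
      rw [← hs]; exact Monoid.pow_exponent_eq_one _
    have h4 : (cf σ y) ^ p ^ s = 1 := by
      have := congrArg (Subtype.val) h3
      simpa using this
    rw [h2, h4]

end Vanish

/-! ### The filtration subgroups -/

/-- Filtration subgroups of the automorphism group. -/
def Ek (p m k : ℕ) (G : Type*) [Group G] : Subgroup (MulAut G) where
  carrier := {σ : MulAut G | ∀ x : G, cf σ x ∈ Subgroup.center G ∧
    ∀ j : ℕ, Pw p j x → Pw p (j + k) (cf σ x) ∧ (m + 1 ≤ j + k → cf σ x = 1)}
  one_mem' := by
    intro x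
    have h1 : cf (1 : MulAut G) x = 1 := by simp [cf]
    rw [h1]
    exact ⟨Subgroup.one_mem _, fun j _ => ⟨Pw_one_elt p _, fun _ => rfl⟩⟩
  mul_mem' := by
    intro σ τ hσ hτ x
    have key : cf (σ * τ) x = cf τ x * cf σ (τ x) := by
      simp only [cf, MulAut.mul_apply]; group
    rw [key]
    refine ⟨Subgroup.mul_mem _ (hτ x).1 (hσ (τ x)).1, fun j hj => ?_⟩
    have hτx : Pw p j (τ x) := by
      rw [apply_eq τ x]
      exact Pw_mul hj (Pw_mono (Nat.le_add_right j _) ((hτ x).2 j hj).1)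
    constructor
    · exact Pw_mul ((hτ x).2 j hj).1 ((hσ (τ x)).2 j hτx).1
    · intro hjk
      rw [((hτ x).2 j hj).2 hjk, ((hσ (τ x)).2 j hτx).2 hjk, one_mul]
  inv_mem' := by
    intro σ hσ x
    have key : cf σ⁻¹ x = (cf σ (σ⁻¹ x))⁻¹ := by
      simp only [cf]
      have h : σ (σ⁻¹ x) = x := by simp [MulAut.inv_def]
      rw [h]
      group
    rw [key]
    have hy : ∀ j : ℕ, Pw p j x → Pw p j (σ⁻¹ x) := fun j hj => Pw_map σ⁻¹ hj
    refine ⟨Subgroup.inv_mem _ (hσ (σ⁻¹ x)).1, fun j hj => ?_⟩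
    constructor
    · exact Pw_inv ((hσ (σ⁻¹ x)).2 j (hy j hj)).1
    · intro hjk
      rw [((hσ (σ⁻¹ x)).2 j (hy j hj)).2 hjk, inv_one]

lemma mem_Ek_iff {p m k : ℕ} {σ : MulAut G} :
    σ ∈ Ek p m k G ↔ ∀ x : G, cf σ x ∈ Subgroup.center G ∧
      ∀ j : ℕ, Pw p j x → Pw p (j + k) (cf σ x) ∧ (m + 1 ≤ j + k → cf σ x = 1) :=
  Iff.rfl

/-- The key commutator identity. -/
lemma cf_commutatorElement (σ τ : MulAut G)
    (hτZ : ∀ x : G, cf τ x ∈ Subgroup.center G) (x : G) :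
    cf ⁅σ, τ⁆ x = (cf τ (cf σ (σ⁻¹ (τ⁻¹ x))))⁻¹ * cf σ (cf τ (σ⁻¹ (τ⁻¹ x))) := by
  set y := σ⁻¹ (τ⁻¹ x) with hy
  have e0 : (⁅σ, τ⁆ : MulAut G) x = σ (τ y) := by
    show (σ * τ * σ⁻¹ * τ⁻¹) x = σ (τ y)
    simp only [MulAut.mul_apply, hy]
  have e1 : σ (τ y) = σ y * (cf τ y * cf σ (cf τ y)) := by
    rw [apply_eq τ y, map_mul, apply_eq σ (cf τ y)]
  have e2 : x = σ y * (cf τ y * cf τ (cf σ y)) := by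
    have hx : x = τ (σ y) := by
      rw [hy]
      simp [MulAut.inv_def]
    rw [hx, apply_eq τ (σ y)]
    congr 1
    rw [apply_eq σ y, cf_mul hτZ]
  rw [cf, e0, e1]
  nth_rewrite 1 [e2]
  group

lemma Ek_commutator {p m k : ℕ} {σ τ : MulAut G}
    (hσ : σ ∈ Ek p m k G) (hτ : τ ∈ Ek p m 1 G) : ⁅σ, τ⁆ ∈ Ek p m (k + 1) G := by
  rw [mem_Ek_iff] at hσ hτ ⊢
  intro x
  set y := σ⁻¹ (τ⁻¹ x) with hy
  have hτZ : ∀ z : G, cf τ z ∈ Subgroup.center G := fun z => (hτ z).1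
  have key := cf_commutatorElement σ τ hτZ x
  rw [← hy] at key
  rw [key]
  have hC := hτ (cf σ y)
  have hD := hσ (cf τ y)
  refine ⟨Subgroup.mul_mem _ (Subgroup.inv_mem _ hC.1) hD.1, fun j hj => ?_⟩
  have hyPw : Pw p j y := Pw_map σ⁻¹ (Pw_map τ⁻¹ hj)
  have hσy := (hσ y).2 j hyPw
  have hτy := (hτ y).2 j hyPw
  have hCj := hC.2 (j + k) hσy.1
  have hDj := hD.2 (j + 1) hτy.1
  constructor
  · have h1 : Pw p (j + k + 1) (cf τ (cf σ y)) := hCj.1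
    have h2 : Pw p (j + 1 + k) (cf σ (cf τ y)) := hDj.1
    have e : j + (k + 1) = j + k + 1 := by omega
    rw [e]
    exact Pw_mul (Pw_inv h1) (by rwa [show j + k + 1 = j + 1 + k by omega])
  · intro hjk
    rw [hCj.2 (by omega), hDj.2 (by omega), inv_one, one_mul]

section Base

variable {p r s : ℕ}

lemma Ek_base [Finite G] (hp : p.Prime)
    (hZ : Subgroup.center G ≤ frattini G)
    (hr : Monoid.exponent (G ⧸ commutator G) = p ^ r)
    (hs : Monoid.exponent (Subgroup.center G) = p ^ s)
    {σ : MulAut G} (hσ : ∀ x : G, cf σ x ∈ Subgroup.center G) :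
    σ ∈ Ek p (min r s) 1 G := by
  rw [mem_Ek_iff]
  intro x
  refine ⟨hσ x, fun j hj => ?_⟩
  constructor
  · obtain ⟨y, hy⟩ := hj
    have h2 : cf σ x = (cf σ y) ^ p ^ j := cf_pow_eval hσ hy
    obtain ⟨w, hw⟩ := pw_one_of_mem_frattini hp (hZ (hσ y))
    refine ⟨w, ?_⟩
    rw [h2, map_pow, hw, ← pow_mul, ← pow_add, Nat.add_comm 1 j]
  · intro hj1
    exact cf_vanish hr hs hσ (Pw_mono (by omega) hj)

end Base

end AutcAux

open AutcAux in
/-- Let `G` be a finite `p`-group with `Z(G) ≤ Φ(G)`, `exp(G/G') = p^r` and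
`exp(Z(G)) = p^s`.  Then the central automorphism group `Aut_c(G)` (the subgroup of
`Aut(G)` of automorphisms `σ` with `x⁻¹ σ(x) ∈ Z(G)` for all `x`) is nilpotent of class
at most `min r s`. -/
theorem autc_nilpotent_of_center_le_frattini {p r s : ℕ} (hp : p.Prime)
    {G : Type*} [Group G] [Finite G] (hG : IsPGroup p G)
    (hZ : Subgroup.center G ≤ frattini G)
    (hr : Monoid.exponent (G ⧸ commutator G) = p ^ r)
    (hs : Monoid.exponent (Subgroup.center G) = p ^ s) :
    ∀ C : Subgroup (MulAut G),
      (C : Set (MulAut G)) = {σ : MulAut G | ∀ x : G, x⁻¹ * σ x ∈ Subgroup.center G} →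
      lowerCentralSeries C (min r s) = ⊥ := by
  intro C hC
  set m := min r s with hm
  have hCmem : ∀ σ : MulAut G, σ ∈ C → ∀ x : G, cf σ x ∈ Subgroup.center G := by
    intro σ hσ
    have : σ ∈ {σ : MulAut G | ∀ x : G, x⁻¹ * σ x ∈ Subgroup.center G} := hC ▸ hσ
    exact this
  have key : ∀ n : ℕ, lowerCentralSeries C n ≤ Ek p m (n + 1) G := by
    intro n
    induction n with
    | zero =>
      intro σ hσ
      exact Ek_base hp hZ hr hs (hCmem σ hσ)
    | succ n ih =>
      show ⁅lowerCentralSeries C n, C⁆ ≤ _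
      refine Subgroup.commutator_le.mpr fun σ hσ τ hτ => ?_
      exact Ek_commutator (ih hσ) (Ek_base hp hZ hr hs (hCmem τ hτ))
  refine le_antisymm ?_ bot_le
  intro σ hσ
  have hmem : (σ : MulAut G) ∈ Ek p m (m + 1) G := key m hσ
  have hfix : ∀ x : G, (σ : MulAut G) x = x := by
    intro x
    have h := ((mem_Ek_iff.mp hmem x).2 0 (Pw_zero p x)).2 (by omega)
    simp only [cf] at h
    exact (inv_mul_eq_one.mp h).symm
  have hone : (σ : MulAut G) = 1 := MulEquiv.ext hfix
  exact Subgroup.mem_bot.mpr hone
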